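/- Let n ≥ 1 and let S be a Sperner family on {1,…,n} with module h_S. Then for every t ∈ ℝ, h_S(t) = Σ_{T ⊆ S} (−1)^{|T|} (1 − t)^{|⋃_{A ∈ T} A|}, where the summand for T = ∅ equals 1; equivalently, h_S(t) = 1 − Σ_i (1 − t)^{|A_i|} + Σ_{i<j} (1 − t)^{|A_i ∪ A_j|} − ⋯ over the members A_1,…,A_k of S. -/

import Mathlib

open MeasureTheory

/-- The Sperner statistic of a family `S` of subsets of `{1,…,n}`:
`H_S(x) = max_{A ∈ S} min_{i ∈ A} x_i`. -/
noncomputable def spernerStat {n : ℕ} (S : Finset (Finset (Fin n))) (hS : S.Nonempty)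
    (hne : ∀ A ∈ S, A.Nonempty) (x : Fin n → ℝ) : ℝ :=
  S.attach.sup' (Finset.attach_nonempty_iff.mpr hS)
    (fun A => A.1.inf' (hne A.1 A.2) x)

/- The module of a Sperner family:
`h_S(t) = Σ_{ε ∈ {0,1}^n, H_S(ε)=0} t^{z(ε)} (1−t)^{n−z(ε)}`, where `z(ε)` is the
number of zero coordinates of `ε`. -/
open scoped Classical in
noncomputable def spernerModule {n : ℕ} (S : Finset (Finset (Fin n))) (hS : S.Nonempty)
    (hne : ∀ A ∈ S, A.Nonempty) (t : ℝ) : ℝ :=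
  ∑ ε : Fin n → Bool,
    if spernerStat S hS hne (fun i => if ε i then 1 else 0) = 0 then
      t ^ (Finset.univ.filter fun i => ε i = false).card *
        (1 - t) ^ (n - (Finset.univ.filter fun i => ε i = false).card)
    else 0

open scoped Classical

lemma aux_inf {n : ℕ} (A : Finset (Fin n)) (hA : A.Nonempty) (ε : Fin n → Bool) :
    A.inf' hA (fun i => if ε i then (1:ℝ) else 0) = 0 ↔ ∃ i ∈ A, ε i = false := by
  constructor
  · intro h
    by_contra hc
    push_neg at hc
    have he : A.inf' hA (fun i => if ε i then (1:ℝ) else 0) = A.inf' hA (fun _ => (1:ℝ)) := by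
      apply Finset.inf'_congr hA rfl
      intro i hi
      simp [hc i hi]
    rw [he, Finset.inf'_const] at h
    norm_num at h
  · rintro ⟨i, hi, hif⟩
    have h1 : A.inf' hA (fun i => if ε i then (1:ℝ) else 0) ≤ 0 := by
      refine le_trans (Finset.inf'_le _ hi) ?_
      simp [hif]
    have h2 : (0:ℝ) ≤ A.inf' hA (fun i => if ε i then (1:ℝ) else 0) := by
      apply Finset.le_inf'
      intro j _
      split <;> norm_num
    linarith

lemma stat_zero_iff {n : ℕ} (S : Finset (Finset (Fin n))) (hS : S.Nonempty)
    (hne : ∀ A ∈ S, A.Nonempty) (ε : Fin n → Bool) :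
    spernerStat S hS hne (fun i => if ε i then 1 else 0) = 0 ↔
      ∀ A ∈ S, ∃ i ∈ A, ε i = false := by
  unfold spernerStat
  constructor
  · intro h A hA
    rw [← aux_inf A (hne A hA) ε]
    have h1 : A.inf' (hne A hA) (fun i => if ε i then (1:ℝ) else 0) ≤ 0 := by
      have hle := Finset.le_sup' (f := fun B : {x // x ∈ S} => B.1.inf' (hne B.1 B.2) fun i => if ε i then (1:ℝ) else 0) (Finset.mem_attach _ ⟨A, hA⟩)
      rw [h] at hle
      exact hle
    have h2 : (0:ℝ) ≤ A.inf' (hne A hA) (fun i => if ε i then (1:ℝ) else 0) := by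
      apply Finset.le_inf'
      intro j _
      split <;> norm_num
    linarith
  · intro h
    apply le_antisymm
    · rw [Finset.sup'_le_iff]
      rintro ⟨A, hA⟩ -
      rw [(aux_inf A (hne A hA) ε).mpr (h A hA)]
    · obtain ⟨A, hA⟩ := hS
      refine le_trans ?_ (Finset.le_sup' (f := fun B : {x // x ∈ S} => B.1.inf' (hne B.1 B.2) fun i => if ε i then (1:ℝ) else 0) (Finset.mem_attach _ ⟨A, hA⟩))
      rw [(aux_inf A (hne A hA) ε).mpr (h A hA)]

lemma sp_prod_indicator {n : ℕ} (T : Finset (Finset (Fin n))) (Z : Finset (Fin n)) :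
    (∏ A ∈ T, (if A ∩ Z = ∅ then (-1:ℝ) else 0)) =
      if ∀ A ∈ T, A ∩ Z = ∅ then (-1:ℝ) ^ T.card else 0 := by
  by_cases h : ∀ A ∈ T, A ∩ Z = ∅
  · rw [if_pos h, ← Finset.prod_const]
    exact Finset.prod_congr rfl fun A hA => if_pos (h A hA)
  · rw [if_neg h]
    push_neg at h
    obtain ⟨A, hA, hAZ⟩ := h
    exact Finset.prod_eq_zero hA (if_neg hAZ.ne_empty)

lemma binom {n : ℕ} (t : ℝ) (W : Finset (Fin n)) :
    ∑ Z ∈ W.powerset, t ^ Z.card * (1 - t) ^ (W.card - Z.card) = 1 := by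
  have h := Finset.prod_add (fun _ : Fin n => t) (fun _ => 1 - t) W
  simp only [Finset.prod_const] at h
  have : (t + (1 - t)) = 1 := by ring
  rw [this, one_pow] at h
  refine Eq.trans ?_ h.symm
  apply Finset.sum_congr rfl
  intro Z hZ
  rw [Finset.mem_powerset] at hZ
  rw [Finset.card_sdiff_of_subset hZ]

lemma sp_inner_sum {n : ℕ} (t : ℝ) (U : Finset (Fin n)) :
    (∑ Z : Finset (Fin n), if Z ⊆ Uᶜ then t ^ Z.card * (1 - t) ^ (n - Z.card) else 0)
      = (1 - t) ^ U.card := by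
  have hmem : ∀ Z : Finset (Fin n), (Z ⊆ Uᶜ) = (Z ∈ Uᶜ.powerset) := by
    intro Z; simp [Finset.mem_powerset]
  simp only [hmem]
  rw [Finset.sum_ite_mem, Finset.univ_inter]
  have hWc : (Uᶜ : Finset (Fin n)).card = n - U.card := by
    rw [Finset.card_compl, Fintype.card_fin]
  have hUn : U.card ≤ n := by
    have := Finset.card_le_univ U; simpa using this
  have : ∀ Z ∈ (Uᶜ : Finset (Fin n)).powerset,
      t ^ Z.card * (1 - t) ^ (n - Z.card)
        = (1 - t) ^ U.card * (t ^ Z.card * (1 - t) ^ ((Uᶜ : Finset (Fin n)).card - Z.card)) := by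
    intro Z hZ
    rw [Finset.mem_powerset] at hZ
    have hZc : Z.card ≤ (Uᶜ : Finset (Fin n)).card := Finset.card_le_card hZ
    have hexp : n - Z.card = U.card + ((Uᶜ : Finset (Fin n)).card - Z.card) := by
      omega
    rw [hexp, pow_add]
    ring
  rw [Finset.sum_congr rfl this, ← Finset.mul_sum, binom, mul_one]

lemma sp_step1 {n : ℕ} (S : Finset (Finset (Fin n))) (hS : S.Nonempty)
    (hne : ∀ A ∈ S, A.Nonempty) (t : ℝ) :
    spernerModule S hS hne t =
      ∑ Z : Finset (Fin n),
        if (∀ A ∈ S, ∃ i ∈ A, i ∈ Z) then t ^ Z.card * (1 - t) ^ (n - Z.card) else 0 := by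
  unfold spernerModule
  refine Fintype.sum_equiv
    ({ toFun := fun ε => Finset.univ.filter fun i => ε i = false
       invFun := fun Z i => decide (i ∉ Z)
       left_inv := by intro ε; funext i; by_cases h : ε i <;> simp [h]
       right_inv := by intro Z; ext i; simp } : (Fin n → Bool) ≃ Finset (Fin n))
    _ _ fun ε => ?_
  simp only [Equiv.coe_fn_mk]
  refine if_congr ?_ rfl rfl
  rw [stat_zero_iff]
  constructor
  · intro h A hA
    obtain ⟨i, hiA, hif⟩ := h A hA
    exact ⟨i, hiA, by simp [hif]⟩
  · intro h A hA
    obtain ⟨i, hiA, hif⟩ := h A hA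
    simp only [Finset.mem_filter, Finset.mem_univ, true_and] at hif
    exact ⟨i, hiA, hif⟩

/-- Inclusion–exclusion formula for the module of a Sperner family:
`h_S(t) = Σ_{T ⊆ S} (−1)^{|T|} (1−t)^{|⋃_{A ∈ T} A|}`. -/
theorem sperner_module_inclusion_exclusion
    (n : ℕ) (hn : 1 ≤ n) (S : Finset (Finset (Fin n))) (hS : S.Nonempty)
    (hne : ∀ A ∈ S, A.Nonempty) (hsp : ∀ A ∈ S, ∀ B ∈ S, A ⊆ B → A = B) (t : ℝ) :
    spernerModule S hS hne t =
      ∑ T ∈ S.powerset, (-1 : ℝ) ^ T.card * (1 - t) ^ (T.biUnion id).card := by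
  rw [sp_step1 S hS hne t]
  have key : ∀ Z : Finset (Fin n),
      (if (∀ A ∈ S, ∃ i ∈ A, i ∈ Z) then t ^ Z.card * (1 - t) ^ (n - Z.card) else 0)
        = ∑ T ∈ S.powerset, (-1:ℝ) ^ T.card *
            (if Z ⊆ (T.biUnion id)ᶜ then t ^ Z.card * (1 - t) ^ (n - Z.card) else 0) := by
    intro Z
    have hfact : (if (∀ A ∈ S, ∃ i ∈ A, i ∈ Z) then t ^ Z.card * (1 - t) ^ (n - Z.card) else 0)
        = (∏ A ∈ S, ((if A ∩ Z = ∅ then (-1:ℝ) else 0) + 1)) *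
            (t ^ Z.card * (1 - t) ^ (n - Z.card)) := by
      by_cases h : ∀ A ∈ S, ∃ i ∈ A, i ∈ Z
      · rw [if_pos h]
        have hp : (∏ A ∈ S, ((if A ∩ Z = ∅ then (-1:ℝ) else 0) + 1)) = 1 := by
          apply Finset.prod_eq_one
          intro A hA
          obtain ⟨i, hiA, hiZ⟩ := h A hA
          have hne' : A ∩ Z ≠ ∅ :=
            Finset.ne_empty_of_mem (Finset.mem_inter.mpr ⟨hiA, hiZ⟩)
          rw [if_neg hne']; ring
        rw [hp, one_mul]
      · rw [if_neg h]
        push_neg at h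
        obtain ⟨A, hA, hAZ⟩ := h
        have hempty : A ∩ Z = ∅ := by
          rw [Finset.eq_empty_iff_forall_notMem]
          intro i hi
          rw [Finset.mem_inter] at hi
          exact hAZ i hi.1 hi.2
        have hp : (∏ A ∈ S, ((if A ∩ Z = ∅ then (-1:ℝ) else 0) + 1)) = 0 := by
          apply Finset.prod_eq_zero hA
          rw [if_pos hempty]; ring
        rw [hp, zero_mul]
    rw [hfact, Finset.prod_add, Finset.sum_mul]
    apply Finset.sum_congr rfl
    intro T hT
    rw [Finset.prod_const_one, mul_one, sp_prod_indicator]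
    have hcond : (∀ A ∈ T, A ∩ Z = ∅) ↔ Z ⊆ (T.biUnion id)ᶜ := by
      simp only [Finset.subset_iff, Finset.mem_compl, Finset.mem_biUnion,
        Finset.eq_empty_iff_forall_notMem, Finset.mem_inter, id, not_exists, not_and]
      tauto
    by_cases hc : ∀ A ∈ T, A ∩ Z = ∅
    · rw [if_pos hc, if_pos (hcond.mp hc)]
    · rw [if_neg hc, if_neg (fun h => hc (hcond.mpr h))]
      ring
  rw [Finset.sum_congr rfl fun Z _ => key Z, Finset.sum_comm]
  apply Finset.sum_congr rfl
  intro T hT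
  rw [← Finset.mul_sum, sp_inner_sum]
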